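/- For every n ∈ ℕ, nonnegative real k, and x ∈ [0,1], the second central moment satisfies P_{n,k}^{⟨k/n⟩}((e₁ − x)²; x) = (k+1)x(1−x)/(n+k). -/
import Mathlib


open Finset Filter

/-- Pochhammer k-symbol: `(λ)_{m,k} = λ(λ+k)⋯(λ+(m-1)k)`. -/
noncomputable def pochK (lam k : ℝ) (m : ℕ) : ℝ :=
  ∏ i ∈ Finset.range m, (lam + i * k)

/-- Lupaş-type operator based on Polya distribution with Pochhammer k-symbol. -/
noncomputable def LupasP (n : ℕ) (k : ℝ) (f : ℝ → ℝ) (x : ℝ) : ℝ :=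
  (1 / pochK n k n) * ∑ m ∈ Finset.range (n + 1),
    (n.choose m : ℝ) * pochK (n * x) k m * pochK (n - n * x) k (n - m) * f (m / n)

/-- Kantorovich-Stancu modification of the Lupaş-type operator. -/
noncomputable def KantK (n : ℕ) (α β k : ℝ) (f : ℝ → ℝ) (x : ℝ) : ℝ :=
  ((n + β + 1) / pochK n k n) * ∑ m ∈ Finset.range (n + 1),
    (n.choose m : ℝ) * pochK (n * x) k m * pochK (n - n * x) k (n - m) *
      ∫ t in ((m + α) / (n + β + 1))..((m + α + 1) / (n + β + 1)), f t

/-- Modulus of continuity of `f` on `[0,1]`. -/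
noncomputable def modulus (f : ℝ → ℝ) (δ : ℝ) : ℝ :=
  sSup {y | ∃ x t : ℝ, x ∈ Set.Icc (0:ℝ) 1 ∧ t ∈ Set.Icc (0:ℝ) 1 ∧
    |t - x| ≤ δ ∧ y = |f t - f x|}

lemma pochK_zero (a k : ℝ) : pochK a k 0 = 1 := by simp [pochK]

lemma pochK_succ (a k : ℝ) (m : ℕ) : pochK a k (m+1) = pochK a k m * (a + m * k) := by
  simp [pochK, Finset.prod_range_succ]

lemma pochK_shift (a k : ℝ) (m : ℕ) : pochK a k (m+1) = a * pochK (a+k) k m := by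
  unfold pochK
  rw [Finset.prod_range_succ']
  simp only [Nat.cast_zero, zero_mul, add_zero]
  rw [mul_comm]
  congr 1
  refine Finset.prod_congr rfl fun i _ => ?_
  push_cast
  ring

lemma pochK_pos {a k : ℝ} (ha : 0 < a) (hk : 0 ≤ k) (m : ℕ) : 0 < pochK a k m :=
  Finset.prod_pos fun i _ => by positivity

lemma vand (k : ℝ) : ∀ (n : ℕ) (a b : ℝ),
    ∑ m ∈ Finset.range (n+1), (n.choose m : ℝ) * pochK a k m * pochK b k (n-m)
      = pochK (a+b) k n := by
  intro n
  induction n with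
  | zero => intro a b; simp [pochK]
  | succ n ih =>
    intro a b
    rw [Finset.sum_range_succ']
    simp only [Nat.choose_zero_right, Nat.cast_one, one_mul, pochK_zero, Nat.sub_zero]
    have hsplit : ∑ i ∈ Finset.range (n+1),
        (((n+1).choose (i+1):ℝ)) * pochK a k (i+1) * pochK b k (n+1-(i+1))
        = (∑ i ∈ Finset.range (n+1), ((n.choose i :ℝ) * pochK a k i * pochK b k (n-i)) * (a + i*k))
          + ∑ i ∈ Finset.range (n+1), ((n.choose (i+1):ℝ)) * pochK a k (i+1) * pochK b k (n-i) := by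
      rw [← Finset.sum_add_distrib]
      refine Finset.sum_congr rfl fun i hi => ?_
      rw [Nat.add_sub_add_right, Nat.choose_succ_succ, pochK_succ]
      push_cast
      ring
    rw [hsplit]
    have hB : (∑ i ∈ Finset.range (n+1), ((n.choose (i+1):ℝ)) * pochK a k (i+1) * pochK b k (n-i))
        + pochK b k (n+1)
        = ∑ i ∈ Finset.range (n+1), ((n.choose i:ℝ) * pochK a k i * pochK b k (n-i)) * (b + ((n:ℝ)-(i:ℝ))*k) := by
      have h := Finset.sum_range_succ'
        (fun m => ((n.choose m:ℝ)) * pochK a k m * pochK b k (n+1-m)) (n+1)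
      simp only [Nat.add_sub_add_right, Nat.choose_zero_right, Nat.cast_one, one_mul,
        pochK_zero, Nat.sub_zero, mul_one] at h
      rw [← h, Finset.sum_range_succ]
      simp only [Nat.choose_succ_self, Nat.cast_zero, zero_mul, add_zero]
      refine Finset.sum_congr rfl fun m hm => ?_
      have hm' : m ≤ n := Nat.lt_succ_iff.mp (Finset.mem_range.mp hm)
      rw [show n + 1 - m = (n - m) + 1 from by omega, pochK_succ, Nat.cast_sub hm']
      ring
    rw [add_assoc, hB, ← Finset.sum_add_distrib]
    have : ∑ i ∈ Finset.range (n+1),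
        (((n.choose i :ℝ) * pochK a k i * pochK b k (n-i)) * (a + i*k)
          + ((n.choose i:ℝ) * pochK a k i * pochK b k (n-i)) * (b + ((n:ℝ)-(i:ℝ))*k))
        = (a + b + n*k) * ∑ i ∈ Finset.range (n+1), (n.choose i :ℝ) * pochK a k i * pochK b k (n-i) := by
      rw [Finset.mul_sum]
      refine Finset.sum_congr rfl fun i hi => ?_
      ring
    rw [this, ih, pochK_succ]
    push_cast
    ring

lemma moment1 (k : ℝ) (n : ℕ) (a b : ℝ) :
    ∑ m ∈ Finset.range (n+1), (m:ℝ) * ((n.choose m : ℝ) * pochK a k m * pochK b k (n-m))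
      = n * a * pochK (a+b+k) k (n-1) := by
  cases n with
  | zero => simp
  | succ n =>
    rw [Finset.sum_range_succ']
    simp only [Nat.cast_zero, zero_mul, add_zero, Nat.add_sub_add_right, Nat.cast_add, Nat.cast_one]
    have key : ∀ i ∈ Finset.range (n+1),
        ((i:ℝ)+1) * (((n+1).choose (i+1):ℝ) * pochK a k (i+1) * pochK b k (n-i))
        = ((n:ℝ)+1) * a * ((n.choose i :ℝ) * pochK (a+k) k i * pochK b k (n-i)) := by
      intro i hi
      have h1 : ((n:ℝ)+1) * (n.choose i) = (((n+1).choose (i+1) : ℕ):ℝ) * ((i:ℝ)+1) := by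
        exact_mod_cast Nat.add_one_mul_choose_eq n i
      rw [pochK_shift]
      linear_combination (-(a * pochK (a+k) k i * pochK b k (n-i))) * h1
    calc ∑ i ∈ Finset.range (n+1), ((i:ℝ)+1) * (((n+1).choose (i+1):ℝ) * pochK a k (i+1) * pochK b k (n-i))
        = ∑ i ∈ Finset.range (n+1), ((n:ℝ)+1) * a * ((n.choose i :ℝ) * pochK (a+k) k i * pochK b k (n-i)) :=
          Finset.sum_congr rfl key
      _ = ((n:ℝ)+1) * a * pochK (a+k+b) k n := by rw [← Finset.mul_sum, vand]
      _ = ((n:ℝ)+1) * a * pochK (a+b+k) k (n+1-1) := by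
          rw [show a+k+b = a+b+k from by ring, Nat.add_sub_cancel]

lemma moment2 (k : ℝ) (n : ℕ) (a b : ℝ) :
    ∑ m ∈ Finset.range (n+1), (m:ℝ) * ((m:ℝ)-1) * ((n.choose m : ℝ) * pochK a k m * pochK b k (n-m))
      = n * a * ((n:ℝ)-1) * (a+k) * pochK (a+b+2*k) k (n-2) := by
  cases n with
  | zero => simp
  | succ n =>
    rw [Finset.sum_range_succ']
    simp only [Nat.cast_zero, zero_mul, add_zero, Nat.add_sub_add_right, Nat.cast_add, Nat.cast_one]
    have key : ∀ i ∈ Finset.range (n+1),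
        ((i:ℝ)+1) * (((i:ℝ)+1)-1) * (((n+1).choose (i+1):ℝ) * pochK a k (i+1) * pochK b k (n-i))
        = ((n:ℝ)+1) * a * ((i:ℝ) * ((n.choose i :ℝ) * pochK (a+k) k i * pochK b k (n-i))) := by
      intro i hi
      have h1 : ((n:ℝ)+1) * (n.choose i) = (((n+1).choose (i+1) : ℕ):ℝ) * ((i:ℝ)+1) := by
        exact_mod_cast Nat.add_one_mul_choose_eq n i
      rw [pochK_shift]
      linear_combination (-((i:ℝ) * a * pochK (a+k) k i * pochK b k (n-i))) * h1
    calc ∑ i ∈ Finset.range (n+1), ((i:ℝ)+1) * (((i:ℝ)+1)-1) * (((n+1).choose (i+1):ℝ) * pochK a k (i+1) * pochK b k (n-i))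
        = ∑ i ∈ Finset.range (n+1), ((n:ℝ)+1) * a * ((i:ℝ) * ((n.choose i :ℝ) * pochK (a+k) k i * pochK b k (n-i))) :=
          Finset.sum_congr rfl key
      _ = ((n:ℝ)+1) * a * ((n:ℝ) * (a+k) * pochK (a+k+b+k) k (n-1)) := by rw [← Finset.mul_sum, moment1]
      _ = ((n:ℝ)+1) * a * (((n:ℝ)+1)-1) * (a+k) * pochK (a+b+2*k) k (n+1-2) := by
          rw [show a+k+b+k = a+b+2*k from by ring, show n+1-2 = n-1 from by omega]
          ring

set_option maxHeartbeats 1000000 in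
theorem lupas_central_moment_two (n : ℕ) (hn : 0 < n) (k : ℝ) (hk : 0 ≤ k)
    (x : ℝ) (hx : x ∈ Set.Icc (0:ℝ) 1) :
    LupasP n k (fun t => (t - x) ^ 2) x = (k + 1) * x * (1 - x) / (n + k) := by
  have hnpos : (0:ℝ) < n := Nat.cast_pos.mpr hn
  have hn' : (n:ℝ) ≠ 0 := ne_of_gt hnpos
  have hnk : (0:ℝ) < (n:ℝ) + k := by positivity
  have key : ∀ m ∈ Finset.range (n+1),
      (n.choose m : ℝ) * pochK ((n:ℝ)*x) k m * pochK ((n:ℝ)-(n:ℝ)*x) k (n-m) * (((m:ℝ)/(n:ℝ) - x)^2)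
      = (1/(n:ℝ)^2) * ((m:ℝ) * ((m:ℝ)-1) * ((n.choose m : ℝ) * pochK ((n:ℝ)*x) k m * pochK ((n:ℝ)-(n:ℝ)*x) k (n-m)))
        + ((1/(n:ℝ)^2 - 2*x/(n:ℝ)) * ((m:ℝ) * ((n.choose m : ℝ) * pochK ((n:ℝ)*x) k m * pochK ((n:ℝ)-(n:ℝ)*x) k (n-m)))
        + x^2 * ((n.choose m : ℝ) * pochK ((n:ℝ)*x) k m * pochK ((n:ℝ)-(n:ℝ)*x) k (n-m))) := by
    intro m _
    field_simp
    ring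
  simp only [LupasP]
  rw [Finset.sum_congr rfl key, Finset.sum_add_distrib, Finset.sum_add_distrib,
    ← Finset.mul_sum, ← Finset.mul_sum, ← Finset.mul_sum,
    moment1, moment2, vand,
    show (n:ℝ)*x + ((n:ℝ)-(n:ℝ)*x) + 2*k = (n:ℝ)+(k+k) from by ring,
    show (n:ℝ)*x + ((n:ℝ)-(n:ℝ)*x) + k = (n:ℝ)+k from by ring,
    show (n:ℝ)*x + ((n:ℝ)-(n:ℝ)*x) = (n:ℝ) from by ring]
  obtain ⟨N, rfl⟩ : ∃ N, n = N+1 := ⟨n-1, by omega⟩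
  rw [pochK_shift ((N+1:ℕ):ℝ) k N, show N+1-1 = N from rfl]
  cases N with
  | zero =>
    simp [pochK]
    have h1 : (1:ℝ)+k ≠ 0 := by positivity
    field_simp
    ring
  | succ S =>
    rw [show S+1+1-2 = S from by omega,
      show ((S+1+1:ℕ):ℝ)+(k+k) = (((S+1+1:ℕ):ℝ)+k)+k from by ring,
      pochK_shift (((S+1+1:ℕ):ℝ)+k) k S]
    have hp2 : 0 < pochK (((S+1+1:ℕ):ℝ)+k+k) k S := by
      apply pochK_pos _ hk
      push_cast
      positivity
    have h2 : ((S+1+1:ℕ):ℝ)+k ≠ 0 := by push_cast; positivity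
    push_cast
    set P := pochK ((S:ℝ)+1+1+k+k) k S with hPdef
    have hp2' : (0:ℝ) < P := by
      rw [hPdef]; exact pochK_pos (by positivity) hk S
    have hS1 : ((S:ℝ)+1+1) ≠ 0 := by positivity
    have h2' : ((S:ℝ)+1+1+k) ≠ 0 := by positivity
    field_simp
    ring
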